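/- For every random matching P and profile c, either P is same-sided with respect to c, or there exists a same-sided random matching Q that strictly lottery dominates P (i.e., d(q_i, c_i) ≤ d(p_i, c_i) for all agents i, with strict inequality for at least one agent). -/

import Mathlib

open Finset
open scoped Classical

/-- A lottery over the `n` objects. -/
def IsLottery {n : ℕ} (p : Fin n → ℝ) : Prop :=
  (∀ a, 0 ≤ p a) ∧ ∑ a, p a = 1

/-- A profile of ideal lotteries, one for each of the `n` agents. -/
def IsProfile {n : ℕ} (c : Fin n → Fin n → ℝ) : Prop :=
  ∀ i, IsLottery (c i)

/-- A random matching: a bistochastic matrix. -/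
def Bistochastic {n : ℕ} (P : Fin n → Fin n → ℝ) : Prop :=
  (∀ i a, 0 ≤ P i a) ∧ (∀ i, ∑ a, P i a = 1) ∧ (∀ a, ∑ i, P i a = 1)

/-- Same-sidedness of a matching `P` with respect to profile `c`:
allocations never exceed ideals on excess-demand objects, never fall below
ideals on excess-supply objects, and equal ideals on unanimous objects. -/
def SameSided {n : ℕ} (c P : Fin n → Fin n → ℝ) : Prop :=
  (∀ a, 1 < ∑ i, c i a → ∀ i, P i a ≤ c i a) ∧
  (∀ a, ∑ i, c i a < 1 → ∀ i, c i a ≤ P i a) ∧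
  (∀ a, ∑ i, c i a = 1 → ∀ i, P i a = c i a)

/-- The ℓ¹ distance between two vectors. -/
noncomputable def d1 {n : ℕ} (p q : Fin n → ℝ) : ℝ :=
  ∑ a, |p a - q a|

/-- `Q` strictly lottery dominates `P` with respect to profile `c`. -/
noncomputable def StrictlyDominates {n : ℕ} (c Q P : Fin n → Fin n → ℝ) : Prop :=
  (∀ i, d1 (Q i) (c i) ≤ d1 (P i) (c i)) ∧ ∃ j, d1 (Q j) (c j) < d1 (P j) (c j)

/-- If `Q` is not same-sided, some column has a strictly-over and a
strictly-under entry. -/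
lemma exists_violation {n : ℕ} {c Q : Fin n → Fin n → ℝ}
    (hQ : Bistochastic Q) (h : ¬ SameSided c Q) :
    ∃ a i j, c i a < Q i a ∧ Q j a < c j a := by
  rw [SameSided, not_and_or, not_and_or] at h
  rcases h with h | h | h
  · push_neg at h
    obtain ⟨a, hs, i, hi⟩ := h
    have hsum : ∑ k, Q k a < ∑ k, c k a := by rw [hQ.2.2 a]; exact hs
    obtain ⟨j, _, hj⟩ := Finset.exists_lt_of_sum_lt hsum
    exact ⟨a, i, j, hi, hj⟩
  · push_neg at h
    obtain ⟨a, hs, j, hj⟩ := h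
    have hsum : ∑ k, c k a < ∑ k, Q k a := by rw [hQ.2.2 a]; exact hs
    obtain ⟨i, _, hi⟩ := Finset.exists_lt_of_sum_lt hsum
    exact ⟨a, i, j, hi, hj⟩
  · push_neg at h
    obtain ⟨a, hs, i, hi⟩ := h
    have hsum : ∑ k, Q k a = ∑ k, c k a := by rw [hQ.2.2 a, hs]
    have hQe := Finset.add_sum_erase Finset.univ (fun k => Q k a) (Finset.mem_univ i)
    have hce := Finset.add_sum_erase Finset.univ (fun k => c k a) (Finset.mem_univ i)
    rcases lt_or_gt_of_ne hi with hlt | hgt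
    · -- Q i a < c i a : find k with c k a < Q k a
      have : ∑ k ∈ Finset.univ.erase i, c k a < ∑ k ∈ Finset.univ.erase i, Q k a := by
        linarith
      obtain ⟨k, _, hk⟩ := Finset.exists_lt_of_sum_lt this
      exact ⟨a, k, i, hk, hlt⟩
    · have : ∑ k ∈ Finset.univ.erase i, Q k a < ∑ k ∈ Finset.univ.erase i, c k a := by
        linarith
      obtain ⟨k, _, hk⟩ := Finset.exists_lt_of_sum_lt this
      exact ⟨a, i, k, hgt, hk⟩

/-- Improvement step: a non-same-sided matching can be modified so that no
agent's distance increases and the total distance strictly decreases. -/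
lemma improve {n : ℕ} {c Q : Fin n → Fin n → ℝ}
    (hc : IsProfile c) (hQ : Bistochastic Q) (h : ¬ SameSided c Q) :
    ∃ Q', Bistochastic Q' ∧ (∀ k, d1 (Q' k) (c k) ≤ d1 (Q k) (c k)) ∧
      ∑ k, d1 (Q' k) (c k) < ∑ k, d1 (Q k) (c k) := by
  obtain ⟨a, i, j, hia, hja⟩ := exists_violation hQ h
  have hij : i ≠ j := by rintro rfl; linarith
  -- find b ≠ a with c j b < Q j b, using that row j of Q and c both sum to 1
  have hrowQ : ∑ x, Q j x = 1 := hQ.2.1 j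
  have hrowc : ∑ x, c j x = 1 := (hc j).2
  have hQe := Finset.add_sum_erase Finset.univ (fun x => Q j x) (Finset.mem_univ a)
  have hce := Finset.add_sum_erase Finset.univ (fun x => c j x) (Finset.mem_univ a)
  have hlt : ∑ x ∈ Finset.univ.erase a, c j x < ∑ x ∈ Finset.univ.erase a, Q j x := by
    linarith
  obtain ⟨b, hbmem, hjb⟩ := Finset.exists_lt_of_sum_lt hlt
  have hba : b ≠ a := Finset.ne_of_mem_erase hbmem
  set δ : ℝ := min (Q i a - c i a) (min (c j a - Q j a) (Q j b - c j b)) with hδdef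
  have hδpos : 0 < δ := by
    apply lt_min (by linarith) (lt_min (by linarith) (by linarith))
  have hδ1 : δ ≤ Q i a - c i a := min_le_left _ _
  have hδ2 : δ ≤ c j a - Q j a := le_trans (min_le_right _ _) (min_le_left _ _)
  have hδ3 : δ ≤ Q j b - c j b := le_trans (min_le_right _ _) (min_le_right _ _)
  set e : Fin n → ℝ := fun x => (if x = a then -δ else 0) + (if x = b then δ else 0) with hedef
  set E : Fin n → Fin n → ℝ := fun k x =>
    (if k = i then e x else 0) + (if k = j then -e x else 0) with hEdef
  set Q' : Fin n → Fin n → ℝ := fun k x => Q k x + E k x with hQ'def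
  have hesum : ∑ x, e x = 0 := by
    simp only [hedef, Finset.sum_add_distrib, Finset.sum_ite_eq' Finset.univ a,
      Finset.sum_ite_eq' Finset.univ b, Finset.mem_univ, if_true]
    ring
  have hea : e a = -δ := by simp [hedef, hba.symm]
  have heb : e b = δ := by simp [hedef, hba]
  have hE0 : ∀ k, k ≠ i → k ≠ j → ∀ x, E k x = 0 := by
    intro k hki hkj x; simp [hEdef, hki, hkj]
  have hEi : ∀ x, E i x = e x := by intro x; simp [hEdef, hij]
  have hEj : ∀ x, E j x = -e x := by intro x; simp [hEdef, hij.symm]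
  have hE0' : ∀ k x, x ≠ a → x ≠ b → E k x = 0 := by
    intro k x hxa hxb
    have : e x = 0 := by simp [hedef, hxa, hxb]
    simp [hEdef, this]
  refine ⟨Q', ⟨?_, ?_, ?_⟩, ?_, ?_⟩
  · -- nonnegativity
    intro k x
    rcases eq_or_ne k i with rfl | hki
    · rcases eq_or_ne x a with rfl | hxa
      · have : Q' k x = Q k x - δ := by simp [hQ'def, hEi, hea, sub_eq_add_neg]
        rw [this]; have := (hc k).1 x; linarith
      · rcases eq_or_ne x b with rfl | hxb
        · have : Q' k x = Q k x + δ := by simp [hQ'def, hEi, heb]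
          rw [this]; have := hQ.1 k x; linarith
        · have : Q' k x = Q k x := by simp [hQ'def, hE0' k x hxa hxb]
          rw [this]; exact hQ.1 k x
    · rcases eq_or_ne k j with rfl | hkj
      · rcases eq_or_ne x a with rfl | hxa
        · have : Q' k x = Q k x + δ := by simp [hQ'def, hEj, hea]
          rw [this]; have := hQ.1 k x; linarith
        · rcases eq_or_ne x b with rfl | hxb
          · have : Q' k x = Q k x - δ := by simp [hQ'def, hEj, heb, sub_eq_add_neg]
            rw [this]; have := (hc k).1 x; linarith
          · have : Q' k x = Q k x := by simp [hQ'def, hE0' k x hxa hxb]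
            rw [this]; exact hQ.1 k x
      · have : Q' k x = Q k x := by simp [hQ'def, hE0 k hki hkj x]
        rw [this]; exact hQ.1 k x
  · -- row sums
    intro k
    have : ∑ x, Q' k x = ∑ x, Q k x + ∑ x, E k x := by
      simp [hQ'def, Finset.sum_add_distrib]
    rw [this, hQ.2.1 k]
    rcases eq_or_ne k i with rfl | hki
    · simp only [hEi, hesum]; ring
    · rcases eq_or_ne k j with rfl | hkj
      · have : ∑ x, E k x = -∑ x, e x := by simp [hEj, Finset.sum_neg_distrib]
        rw [this, hesum]; ring
      · have : ∑ x, E k x = 0 := Finset.sum_eq_zero fun x _ => hE0 k hki hkj x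
        rw [this]; ring
  · -- column sums
    intro x
    have hsplit : ∑ k, Q' k x = ∑ k, Q k x + ∑ k, E k x := by
      simp [hQ'def, Finset.sum_add_distrib]
    have hEcol : ∑ k, E k x = 0 := by
      simp only [hEdef, Finset.sum_add_distrib, Finset.sum_ite_eq' Finset.univ i,
        Finset.sum_ite_eq' Finset.univ j, Finset.mem_univ, if_true]
      ring
    rw [hsplit, hEcol, hQ.2.2 x]; ring
  · -- individual distances do not increase
    intro k
    rcases eq_or_ne k i with rfl | hki
    · -- agent i : term at a drops by δ, term at b rises by at most δ
      have key : d1 (Q' k) (c k) - d1 (Q k) (c k) =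
          (|Q' k a - c k a| - |Q k a - c k a|) + (|Q' k b - c k b| - |Q k b - c k b|) := by
        rw [d1, d1, ← Finset.sum_sub_distrib]
        exact Finset.sum_eq_add a b hba.symm
          (fun x _ hx => by
            have : Q' k x = Q k x := by simp [hQ'def, hE0' k x hx.1 hx.2]
            rw [this]; ring)
          (fun hx => absurd (Finset.mem_univ a) hx)
          (fun hx => absurd (Finset.mem_univ b) hx)
      have ha' : Q' k a = Q k a - δ := by simp [hQ'def, hEi, hea, sub_eq_add_neg]
      have hb' : Q' k b = Q k b + δ := by simp [hQ'def, hEi, heb]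
      have t1 : |Q' k a - c k a| - |Q k a - c k a| = -δ := by
        rw [ha', abs_of_nonneg (by linarith), abs_of_nonneg (by linarith)]
        ring
      have t2 : |Q' k b - c k b| - |Q k b - c k b| ≤ δ := by
        rw [hb']
        have : |Q k b + δ - c k b| ≤ |Q k b - c k b| + |δ| := by
          have := abs_add_le (Q k b - c k b) δ
          rw [show Q k b + δ - c k b = Q k b - c k b + δ by ring]; exact this
        have hδa : |δ| = δ := abs_of_pos hδpos
        linarith
      linarith
    · rcases eq_or_ne k j with rfl | hkj
      · -- agent j : both terms drop by δ
        have key : d1 (Q' k) (c k) - d1 (Q k) (c k) =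
            (|Q' k a - c k a| - |Q k a - c k a|) + (|Q' k b - c k b| - |Q k b - c k b|) := by
          rw [d1, d1, ← Finset.sum_sub_distrib]
          exact Finset.sum_eq_add a b hba.symm
            (fun x _ hx => by
              have : Q' k x = Q k x := by simp [hQ'def, hE0' k x hx.1 hx.2]
              rw [this]; ring)
            (fun hx => absurd (Finset.mem_univ a) hx)
            (fun hx => absurd (Finset.mem_univ b) hx)
        have ha' : Q' k a = Q k a + δ := by simp [hQ'def, hEj, hea]
        have hb' : Q' k b = Q k b - δ := by simp [hQ'def, hEj, heb, sub_eq_add_neg]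
        have t1 : |Q' k a - c k a| - |Q k a - c k a| = -δ := by
          rw [ha', abs_of_nonpos (by linarith), abs_of_nonpos (by linarith)]
          ring
        have t2 : |Q' k b - c k b| - |Q k b - c k b| = -δ := by
          rw [hb', abs_of_nonneg (by linarith), abs_of_nonneg (by linarith)]
          ring
        linarith
      · have heq : ∀ x, Q' k x = Q k x := fun x => by simp [hQ'def, hE0 k hki hkj x]
        have : d1 (Q' k) (c k) = d1 (Q k) (c k) := by
          rw [d1, d1]; exact Finset.sum_congr rfl fun x _ => by rw [heq x]
        linarith
  · -- total distance strictly decreases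
    have key : ∑ k, d1 (Q' k) (c k) - ∑ k, d1 (Q k) (c k) =
        (d1 (Q' i) (c i) - d1 (Q i) (c i)) + (d1 (Q' j) (c j) - d1 (Q j) (c j)) := by
      rw [← Finset.sum_sub_distrib]
      exact Finset.sum_eq_add i j hij
        (fun k _ hk => by
          have heq : ∀ x, Q' k x = Q k x := fun x => by simp [hQ'def, hE0 k hk.1 hk.2 x]
          have : d1 (Q' k) (c k) = d1 (Q k) (c k) := by
            rw [d1, d1]; exact Finset.sum_congr rfl fun x _ => by rw [heq x]
          rw [this]; ring)
        (fun hx => absurd (Finset.mem_univ i) hx)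
        (fun hx => absurd (Finset.mem_univ j) hx)
    have hDi : d1 (Q' i) (c i) - d1 (Q i) (c i) ≤ 0 := by
      have keyi : d1 (Q' i) (c i) - d1 (Q i) (c i) =
          (|Q' i a - c i a| - |Q i a - c i a|) + (|Q' i b - c i b| - |Q i b - c i b|) := by
        rw [d1, d1, ← Finset.sum_sub_distrib]
        exact Finset.sum_eq_add a b hba.symm
          (fun x _ hx => by
            have : Q' i x = Q i x := by simp [hQ'def, hE0' i x hx.1 hx.2]
            rw [this]; ring)
          (fun hx => absurd (Finset.mem_univ a) hx)
          (fun hx => absurd (Finset.mem_univ b) hx)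
      have ha' : Q' i a = Q i a - δ := by simp [hQ'def, hEi, hea, sub_eq_add_neg]
      have hb' : Q' i b = Q i b + δ := by simp [hQ'def, hEi, heb]
      have t1 : |Q' i a - c i a| - |Q i a - c i a| = -δ := by
        rw [ha', abs_of_nonneg (by linarith), abs_of_nonneg (by linarith)]
        ring
      have t2 : |Q' i b - c i b| - |Q i b - c i b| ≤ δ := by
        rw [hb']
        have : |Q i b + δ - c i b| ≤ |Q i b - c i b| + |δ| := by
          have := abs_add_le (Q i b - c i b) δ
          rw [show Q i b + δ - c i b = Q i b - c i b + δ by ring]; exact this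
        have hδa : |δ| = δ := abs_of_pos hδpos
        linarith
      linarith
    have hDj : d1 (Q' j) (c j) - d1 (Q j) (c j) = -(2*δ) := by
      have keyj : d1 (Q' j) (c j) - d1 (Q j) (c j) =
          (|Q' j a - c j a| - |Q j a - c j a|) + (|Q' j b - c j b| - |Q j b - c j b|) := by
        rw [d1, d1, ← Finset.sum_sub_distrib]
        exact Finset.sum_eq_add a b hba.symm
          (fun x _ hx => by
            have : Q' j x = Q j x := by simp [hQ'def, hE0' j x hx.1 hx.2]
            rw [this]; ring)
          (fun hx => absurd (Finset.mem_univ a) hx)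
          (fun hx => absurd (Finset.mem_univ b) hx)
      have ha' : Q' j a = Q j a + δ := by simp [hQ'def, hEj, hea]
      have hb' : Q' j b = Q j b - δ := by simp [hQ'def, hEj, heb, sub_eq_add_neg]
      have t1 : |Q' j a - c j a| - |Q j a - c j a| = -δ := by
        rw [ha', abs_of_nonpos (by linarith), abs_of_nonpos (by linarith)]
        ring
      have t2 : |Q' j b - c j b| - |Q j b - c j b| = -δ := by
        rw [hb', abs_of_nonneg (by linarith), abs_of_nonneg (by linarith)]
        ring
      linarith
    linarith

/-- Every random matching is either same-sided, or is strictly lottery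
dominated by some same-sided random matching. -/
theorem sameSided_or_dominated {n : ℕ}
    (c P : Fin n → Fin n → ℝ) (hc : IsProfile c) (hP : Bistochastic P) :
    SameSided c P ∨
      ∃ Q : Fin n → Fin n → ℝ, Bistochastic Q ∧ SameSided c Q ∧
        StrictlyDominates c Q P := by
  by_cases hss : SameSided c P
  · exact Or.inl hss
  right
  set S : Set (Fin n → Fin n → ℝ) :=
    {Q | Bistochastic Q ∧ ∀ k, d1 (Q k) (c k) ≤ d1 (P k) (c k)} with hSdef
  have hPS : P ∈ S := ⟨hP, fun k => le_refl _⟩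
  -- S is contained in the compact cube
  have hsub : S ⊆ Set.univ.pi fun _ : Fin n =>
      Set.univ.pi fun _ : Fin n => Set.Icc (0:ℝ) 1 := by
    intro Q hQ
    rintro k - x -
    refine ⟨hQ.1.1 k x, ?_⟩
    have h1 : Q k x ≤ ∑ y, Q k y :=
      Finset.single_le_sum (fun y _ => hQ.1.1 k y) (Finset.mem_univ x)
    rw [hQ.1.2.1 k] at h1
    exact h1
  have hcube : IsCompact (Set.univ.pi fun _ : Fin n =>
      Set.univ.pi fun _ : Fin n => Set.Icc (0:ℝ) 1) :=
    isCompact_univ_pi fun _ => isCompact_univ_pi fun _ => isCompact_Icc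
  -- S is closed
  have heval : ∀ (k x : Fin n), Continuous fun Q : Fin n → Fin n → ℝ => Q k x :=
    fun k x => (continuous_apply x).comp (continuous_apply k)
  have hd1cont : ∀ k : Fin n, Continuous fun Q : Fin n → Fin n → ℝ => d1 (Q k) (c k) := by
    intro k
    simp only [d1]
    exact continuous_finset_sum _ fun x _ => ((heval k x).sub continuous_const).abs
  have hSclosed : IsClosed S := by
    have h1 : IsClosed {Q : Fin n → Fin n → ℝ | ∀ k x, 0 ≤ Q k x} := by
      have : {Q : Fin n → Fin n → ℝ | ∀ k x, 0 ≤ Q k x} =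
          ⋂ k, ⋂ x, {Q : Fin n → Fin n → ℝ | 0 ≤ Q k x} := by
        ext Q; simp
      rw [this]
      exact isClosed_iInter fun k => isClosed_iInter fun x =>
        isClosed_le continuous_const (heval k x)
    have h2 : IsClosed {Q : Fin n → Fin n → ℝ | ∀ k, ∑ x, Q k x = 1} := by
      have : {Q : Fin n → Fin n → ℝ | ∀ k, ∑ x, Q k x = 1} =
          ⋂ k, {Q : Fin n → Fin n → ℝ | ∑ x, Q k x = 1} := by
        ext Q; simp
      rw [this]
      exact isClosed_iInter fun k =>
        isClosed_eq (continuous_finset_sum _ fun x _ => heval k x) continuous_const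
    have h3 : IsClosed {Q : Fin n → Fin n → ℝ | ∀ x, ∑ k, Q k x = 1} := by
      have : {Q : Fin n → Fin n → ℝ | ∀ x, ∑ k, Q k x = 1} =
          ⋂ x, {Q : Fin n → Fin n → ℝ | ∑ k, Q k x = 1} := by
        ext Q; simp
      rw [this]
      exact isClosed_iInter fun x =>
        isClosed_eq (continuous_finset_sum _ fun k _ => heval k x) continuous_const
    have h4 : IsClosed {Q : Fin n → Fin n → ℝ | ∀ k, d1 (Q k) (c k) ≤ d1 (P k) (c k)} := by
      have : {Q : Fin n → Fin n → ℝ | ∀ k, d1 (Q k) (c k) ≤ d1 (P k) (c k)} =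
          ⋂ k, {Q : Fin n → Fin n → ℝ | d1 (Q k) (c k) ≤ d1 (P k) (c k)} := by
        ext Q; simp
      rw [this]
      exact isClosed_iInter fun k => isClosed_le (hd1cont k) continuous_const
    have hSeq : S = ({Q : Fin n → Fin n → ℝ | ∀ k x, 0 ≤ Q k x} ∩
        {Q : Fin n → Fin n → ℝ | ∀ k, ∑ x, Q k x = 1} ∩
        {Q : Fin n → Fin n → ℝ | ∀ x, ∑ k, Q k x = 1}) ∩
        {Q : Fin n → Fin n → ℝ | ∀ k, d1 (Q k) (c k) ≤ d1 (P k) (c k)} := by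
      ext Q
      simp only [hSdef, Set.mem_setOf_eq, Set.mem_inter_iff, Bistochastic]
      tauto
    rw [hSeq]
    exact (h1.inter h2 |>.inter h3).inter h4
  have hScompact : IsCompact S := hcube.of_isClosed_subset hSclosed hsub
  have hFcont : ContinuousOn (fun Q : Fin n → Fin n → ℝ => ∑ k, d1 (Q k) (c k)) S :=
    (continuous_finset_sum _ fun k _ => hd1cont k).continuousOn
  obtain ⟨Q, hQS, hmin⟩ := hScompact.exists_isMinOn ⟨P, hPS⟩ hFcont
  have hQss : SameSided c Q := by
    by_contra hns
    obtain ⟨Q'', hQ''b, hle, hlt⟩ := improve hc hQS.1 hns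
    have hmem : Q'' ∈ S := ⟨hQ''b, fun k => (hle k).trans (hQS.2 k)⟩
    exact absurd (hmin hmem) (not_le.mpr hlt)
  refine ⟨Q, hQS.1, hQss, hQS.2, ?_⟩
  obtain ⟨P', hP'b, hle, hlt⟩ := improve hc hP hss
  have hP'S : P' ∈ S := ⟨hP'b, hle⟩
  have hFQ : ∑ k, d1 (Q k) (c k) ≤ ∑ k, d1 (P' k) (c k) := hmin hP'S
  by_contra hno
  push_neg at hno
  have hge : ∑ k, d1 (P k) (c k) ≤ ∑ k, d1 (Q k) (c k) :=
    Finset.sum_le_sum fun k _ => hno k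
  linarith
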